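/- Let H ≥ 1, C > 0, and δ₁, ..., δ_{H-1} ∈ ℝ. Then there exists exactly one tuple (β₁, ..., β_H) of positive real numbers satisfying β₁⋯β_H = C and β_{i+1} − β_i = δ_i for all i = 1, ..., H−1. -/
import Mathlib


/-- For H ≥ 1, C > 0 and reals δ₁,...,δ_{H-1}, there is exactly one
tuple (β₁,...,β_H) of positive reals with β₁⋯β_H = C and β_{i+1} − β_i = δ_i. -/
theorem stmt_0 (H : ℕ) (hH : 1 ≤ H) (C : ℝ) (hC : 0 < C) (δ : ℕ → ℝ) :
    ∃! β : Fin H → ℝ,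
      (∀ i, 0 < β i) ∧ (∏ i, β i = C) ∧
      (∀ i : ℕ, ∀ h : i + 1 < H, β ⟨i + 1, h⟩ - β ⟨i, by omega⟩ = δ i) := by
  set s : ℕ → ℝ := fun i => ∑ j ∈ Finset.range i, δ j with hs
  have hne : (Finset.univ : Finset (Fin H)).Nonempty := by
    have : 0 < H := hH
    exact ⟨⟨0, this⟩, Finset.mem_univ _⟩
  obtain ⟨i₀, -, hi₀⟩ := Finset.exists_min_image Finset.univ (fun i : Fin H => s i) hne
  set m : ℝ := s i₀ with hm
  have hmle : ∀ i : Fin H, m ≤ s i := fun i => hi₀ i (Finset.mem_univ i)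
  set f : ℝ → ℝ := fun x => ∏ i : Fin H, (x + s i) with hf
  -- strict mono on Ioi (-m)
  have hmono : ∀ x y : ℝ, -m < x → x < y → f x < f y := by
    intro x y hx hxy
    apply Finset.prod_lt_prod_of_nonempty _ _ hne
    · intro i _
      have := hmle i
      linarith
    · intro i _
      linarith
  have hfcont : Continuous f := by
    apply continuous_finset_prod
    intro i _
    exact continuous_id.add continuous_const
  have hfm : f (-m) = 0 := by
    apply Finset.prod_eq_zero (Finset.mem_univ i₀)
    simp [hm]
  set T : ℝ := C + 1 - m with hT
  have hTf : C + 1 ≤ f T := by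
    calc C + 1 = (C + 1) ^ 1 := by ring
    _ ≤ (C + 1) ^ H := by
        apply pow_le_pow_right₀ (by linarith) hH
    _ = ∏ _i : Fin H, (C + 1) := by
        simp [Finset.prod_const, Finset.card_univ]
    _ ≤ f T := by
        apply Finset.prod_le_prod
        · intro i _; positivity
        · intro i _; have := hmle i; simp only [hT]; linarith
  have hmT : -m ≤ T := by linarith
  obtain ⟨x, hxmem, hxC⟩ := intermediate_value_Icc hmT hfcont.continuousOn
    (show C ∈ Set.Icc (f (-m)) (f T) by
      constructor
      · rw [hfm]; linarith
      · linarith)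
  have hxgt : -m < x := by
    rcases lt_or_eq_of_le hxmem.1 with h | h
    · exact h
    · exfalso; rw [← h, hfm] at hxC; linarith
  refine ⟨fun i => x + s i, ⟨?_, ?_, ?_⟩, ?_⟩
  · intro i
    have := hmle i
    show 0 < x + s i.1
    linarith
  · exact hxC
  · intro i h
    simp only [hs, Finset.sum_range_succ]
    ring
  · -- uniqueness
    intro β' ⟨hpos, hprod, hdiff⟩
    have hform : ∀ k, ∀ hk : k < H, β' ⟨k, hk⟩ = β' ⟨0, hH⟩ + s k := by
      intro k
      induction k with
      | zero => intro hk; simp [hs]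
      | succ n ih =>
        intro hk
        have hn : n < H := by omega
        have := hdiff n hk
        have hihn := ih hn
        simp only [hs, Finset.sum_range_succ]
        have : β' ⟨n + 1, hk⟩ = β' ⟨n, hn⟩ + δ n := by linarith [hdiff n hk]
        rw [this, hihn]; ring
    set b : ℝ := β' ⟨0, hH⟩ with hb
    have hform' : ∀ i : Fin H, β' i = b + s i := by
      intro i
      have := hform i.1 i.2
      simpa using this
    have hbgt : -m < b := by
      have := hpos i₀
      rw [hform' i₀] at this
      linarith
    have hfb : f b = C := by
      rw [← hprod]
      exact Finset.prod_congr rfl (fun i _ => (hform' i).symm)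
    have hbx : b = x := by
      rcases lt_trichotomy b x with h | h | h
      · exfalso; have := hmono b x hbgt h; rw [hfb, hxC] at this; linarith
      · exact h
      · exfalso; have := hmono x b hxgt h; rw [hfb, hxC] at this; linarith
    funext i
    rw [hform' i, hbx]
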